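/- Let X be a compact metric space, T : X → X a surjective continuous map, and f ∈ C(X,ℝ). Then for each finite open cover 𝒰 of X, each compact subset K of X, and all n, m ∈ ℕ, P_n(T,f∘T^m,T^{-m}𝒰,T^{-m}K) = P_n(T,f,𝒰,K), where T^{-m}𝒰 = { T^{-m}U : U ∈ 𝒰 }. -/

import Mathlib

open Filter Set Topology MeasureTheory

noncomputable section

variable {X : Type*}

/-- Birkhoff sum `f_n(x) = ∑_{j<n} f(T^j x)`. -/
def birk (T : X → X) (f : X → ℝ) (n : ℕ) (x : X) : ℝ :=
  ∑ j ∈ Finset.range n, f (T^[j] x)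

/-- `P_n(T,f,δ,K)`: supremum of `∑_{x∈E} exp f_n(x)` over `(n,δ)`-separated
subsets `E ⊆ K`. -/
def sepPn [MetricSpace X] (T : X → X) (f : X → ℝ) (n : ℕ) (δ : ℝ) (K : Set X) : ℝ :=
  sSup { r : ℝ | ∃ E : Finset X, ↑E ⊆ K ∧
    (∀ x ∈ E, ∀ y ∈ E, x ≠ y → ∃ i < n, δ < dist (T^[i] x) (T^[i] y)) ∧
    r = ∑ x ∈ E, Real.exp (birk T f n x) }

/-- The topological pressure of `T` for the subset `K`:
`P(T,f,K) = lim_{δ→0} limsup_n (1/n) log P_n(T,f,δ,K)`; since the expression is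
nonincreasing in `δ`, the limit is the supremum over `δ > 0`. -/
def pres [MetricSpace X] (T : X → X) (f : X → ℝ) (K : Set X) : EReal :=
  ⨆ (δ : ℝ) (_ : 0 < δ), atTop.limsup fun n : ℕ =>
    ((Real.log (sepPn T f n δ K) / n : ℝ) : EReal)

/-- The `ε`-stable set `W^s_ε(x,T)`. -/
def epsStable [MetricSpace X] (T : X → X) (ε : ℝ) (x : X) : Set X :=
  { y | ∀ n : ℕ, dist (T^[n] x) (T^[n] y) ≤ ε }

/-- The topological pressure of the preimages of the `ε`-stable set of `x`:
`P_s(T,f,x,ε) = lim_{δ→0} limsup_n (1/n) log P_n(T,f,δ,T^{-n}W^s_ε(x,T))`. -/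
def Ps [MetricSpace X] (T : X → X) (f : X → ℝ) (x : X) (ε : ℝ) : EReal :=
  ⨆ (δ : ℝ) (_ : 0 < δ), atTop.limsup fun n : ℕ =>
    ((Real.log (sepPn T f n δ ((T^[n]) ⁻¹' epsStable T ε x)) / n : ℝ) : EReal)

/-- A finite open cover of `X`. -/
def IsOpenCover [TopologicalSpace X] (𝒰 : Finset (Set X)) : Prop :=
  (∀ U ∈ 𝒰, IsOpen U) ∧ ⋃₀ (𝒰 : Set (Set X)) = univ

/-- A finite Borel cover of `X`. -/
def IsBorelCover [MeasurableSpace X] (𝒱 : Finset (Set X)) : Prop :=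
  (∀ V ∈ 𝒱, MeasurableSet V) ∧ ⋃₀ (𝒱 : Set (Set X)) = univ

/-- `𝒱` refines the iterated cover `𝒰_0^{n-1} = ⋁_{i<n} T^{-i}𝒰`. -/
def RefinesIter (T : X → X) (𝒰 : Finset (Set X)) (n : ℕ) (𝒱 : Finset (Set X)) : Prop :=
  ∀ V ∈ 𝒱, ∃ g : Fin n → Set X, (∀ i, g i ∈ 𝒰) ∧ V ⊆ ⋂ i : Fin n, (T^[(i : ℕ)]) ⁻¹' g i

/-- `P_n(T,f,𝒰,K)`: infimum over finite Borel covers `𝒱` refining `𝒰_0^{n-1}` of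
`∑_{V∈𝒱} sup_{x ∈ V∩K} exp f_n(x)` (an empty summand contributes `0`, which is
`Real.sSup ∅`). -/
def covPn [MeasurableSpace X] (T : X → X) (f : X → ℝ) (𝒰 : Finset (Set X)) (n : ℕ)
    (K : Set X) : ℝ :=
  sInf { r : ℝ | ∃ 𝒱 : Finset (Set X), IsBorelCover 𝒱 ∧ RefinesIter T 𝒰 n 𝒱 ∧
    r = ∑ V ∈ 𝒱, sSup ((fun x => Real.exp (birk T f n x)) '' (V ∩ K)) }

/-- A finite Borel partition of `X`. -/
def IsFinPartition [MeasurableSpace X] (α : Finset (Set X)) : Prop :=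
  (∀ A ∈ α, MeasurableSet A) ∧ ⋃₀ (α : Set (Set X)) = univ ∧
    (α : Set (Set X)).Pairwise Disjoint

/-- `H_μ(⋁_{i<n} T^{-i}α)`, computed over all atoms `⋂_{i<n} T^{-i} A_i`. -/
def dynH [MeasurableSpace X] (μ : Measure X) (T : X → X) (α : Finset (Set X)) (n : ℕ) : ℝ :=
  ∑ g : Fin n → α, Real.negMulLog ((μ (⋂ i : Fin n, (T^[(i : ℕ)]) ⁻¹' (g i : Set X))).toReal)

/-- `h_μ(T,α) = lim_n (1/n) H_μ(α_0^{n-1})`, which for an invariant measure equals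
the infimum of `(1/n) H_μ(α_0^{n-1})` over `n ≥ 1`. -/
def entPart [MeasurableSpace X] (μ : Measure X) (T : X → X) (α : Finset (Set X)) : ℝ :=
  ⨅ n : ℕ, dynH μ T α (n + 1) / (n + 1 : ℝ)

/-- The measure-theoretic entropy `h_μ(T)`. -/
def mEnt [MeasurableSpace X] (μ : Measure X) (T : X → X) : EReal :=
  ⨆ (α : Finset (Set X)) (_ : IsFinPartition α), ((entPart μ T α : ℝ) : EReal)

/-- The measure-theoretic pressure `P_μ(T,f) = h_μ(T) + ∫ f dμ`. -/
def mPres [MeasurableSpace X] (μ : Measure X) (T : X → X) (f : X → ℝ) : EReal :=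
  mEnt μ T + ((∫ x, f x ∂μ : ℝ) : EReal)

/-- The stable set `W^s(x,T)`. -/
def stableSet [MetricSpace X] (T : X → X) (x : X) : Set X :=
  { y | Tendsto (fun n : ℕ => dist (T^[n] x) (T^[n] y)) atTop (𝓝 0) }

/-- A Cantor set: a nonempty compact perfect totally disconnected set. -/
def IsCantorSet [TopologicalSpace X] (C : Set X) : Prop :=
  C.Nonempty ∧ IsCompact C ∧ Perfect C ∧ IsTotallyDisconnected C

/-- A weakly mixing set for `T`. -/
def IsWeaklyMixingSet [TopologicalSpace X] (T : X → X) (A : Set X) : Prop :=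
  A.Nonempty ∧ IsClosed A ∧
  ∃ B : Set X, B ⊆ A ∧
    (∃ C : ℕ → Set X, (∀ n, IsCantorSet (C n)) ∧ B = ⋃ n, C n) ∧
    closure B = A ∧
    ∀ C : Set X, C ⊆ B → IsCantorSet C →
      ∀ g : C → X, Continuous g → (∀ c : C, g c ∈ A) →
        ∃ φ : ℕ → ℕ, StrictMono φ ∧
          ∀ c : C, Tendsto (fun i => T^[φ i] (c : X)) atTop (𝓝 (g c))

section Aux

open Function Set

variable {X : Type*}

private lemma sum_image_le'' {α β : Type*} [DecidableEq β] (s : Finset α) (F : α → β)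
    (g : β → ℝ) (hg : ∀ b, 0 ≤ g b) : ∑ b ∈ s.image F, g b ≤ ∑ a ∈ s, g (F a) := by
  classical
  induction s using Finset.induction_on with
  | empty => simp
  | insert a s ha ih =>
    rw [Finset.image_insert, Finset.sum_insert ha]
    by_cases hfa : F a ∈ s.image F
    · rw [Finset.insert_eq_self.mpr hfa]
      exact le_add_of_nonneg_of_le (hg _) ih
    · rw [Finset.sum_insert hfa]; exact add_le_add_right ih _

private lemma birk_comp' (T : X → X) (f : X → ℝ) (m n : ℕ) (x : X) :
    birk T (fun y => f (T^[m] y)) n x = birk T f n (T^[m] x) := by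
  unfold birk
  refine Finset.sum_congr rfl fun j _ => ?_
  show f (T^[m] (T^[j] x)) = f (T^[j] (T^[m] x))
  rw [← Function.iterate_add_apply, ← Function.iterate_add_apply, Nat.add_comm]

private lemma iter_preim_comm (T : X → X) (i m : ℕ) (A : Set X) :
    T^[i] ⁻¹' (T^[m] ⁻¹' A) = T^[m] ⁻¹' (T^[i] ⁻¹' A) := by
  rw [← Set.preimage_comp, ← Function.iterate_add, ← Set.preimage_comp,
    ← Function.iterate_add, Nat.add_comm]

private lemma exp_birk_bddAbove [MetricSpace X] [CompactSpace X] (T : X → X)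
    (hT : Continuous T) (f : X → ℝ) (hf : Continuous f) (n : ℕ) (S : Set X) :
    BddAbove ((fun x => Real.exp (birk T f n x)) '' S) := by
  have hc : Continuous fun x => Real.exp (birk T f n x) := by
    apply Real.continuous_exp.comp
    exact continuous_finset_sum _ fun j _ => hf.comp (hT.iterate j)
  have h1 : BddAbove ((fun x => Real.exp (birk T f n x)) '' Set.univ) :=
    (isCompact_univ.image hc).bddAbove
  exact h1.mono (Set.image_mono (Set.subset_univ S))

private lemma exists_refining [MeasurableSpace X] [TopologicalSpace X] [BorelSpace X]
    (T : X → X) (hT : Continuous T) (𝒰 : Finset (Set X)) (h𝒰 : IsOpenCover 𝒰) (n : ℕ) :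
    ∃ 𝒱 : Finset (Set X), IsBorelCover 𝒱 ∧ RefinesIter T 𝒰 n 𝒱 := by
  classical
  refine ⟨Finset.image (fun g : Fin n → {U // U ∈ 𝒰} =>
    ⋂ i : Fin n, T^[(i : ℕ)] ⁻¹' (g i : Set X)) Finset.univ, ⟨?_, ?_⟩, ?_⟩
  · intro V hV
    obtain ⟨g, -, rfl⟩ := Finset.mem_image.mp hV
    exact MeasurableSet.iInter fun i =>
      ((h𝒰.1 _ (g i).2).measurableSet).preimage (hT.iterate _).measurable
  · apply Set.eq_univ_of_forall
    intro x
    have hg : ∀ i : Fin n, ∃ U, U ∈ 𝒰 ∧ T^[(i : ℕ)] x ∈ U := by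
      intro i
      have hx : T^[(i : ℕ)] x ∈ ⋃₀ (𝒰 : Set (Set X)) := h𝒰.2.symm ▸ Set.mem_univ _
      obtain ⟨U, hU, hxU⟩ := hx
      exact ⟨U, hU, hxU⟩
    choose U hU hxU using hg
    refine Set.mem_sUnion.mpr ⟨_, Finset.mem_coe.mpr (Finset.mem_image_of_mem _
      (Finset.mem_univ fun i => (⟨U i, hU i⟩ : {U // U ∈ 𝒰}))), ?_⟩
    exact Set.mem_iInter.mpr fun i => hxU i
  · intro V hV
    obtain ⟨g, -, rfl⟩ := Finset.mem_image.mp hV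
    exact ⟨fun i => (g i : Set X), fun i => (g i).2, subset_rfl⟩

end Aux

/-- For a surjective continuous `T` on a compact metric space,
`f ∈ C(X,ℝ)`, a finite open cover `𝒰` and a compact `K ⊆ X`:
`P_n(T, f∘Tᵐ, T^{-m}𝒰, T^{-m}K) = P_n(T,f,𝒰,K)`. -/
theorem stmt16 [MetricSpace X] [CompactSpace X] [MeasurableSpace X] [BorelSpace X]
    (T : X → X) (hT : Continuous T) (hTs : Function.Surjective T) (f : C(X, ℝ))
    (𝒰 : Finset (Set X)) (h𝒰 : IsOpenCover 𝒰) (K : Set X) (hK : IsCompact K)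
    (n m : ℕ) :
    covPn T (fun x => f (T^[m] x))
        (@Finset.image _ _ (Classical.decEq _) (fun U => T^[m] ⁻¹' U) 𝒰) n
        (T^[m] ⁻¹' K) =
      covPn T ⇑f 𝒰 n K := by
  classical
  have hTm : Function.Surjective (T^[m]) := hTs.iterate m
  have hTmc : Continuous (T^[m]) := hT.iterate m
  set g : X → ℝ := fun x => f (T^[m] x) with hgdef
  have hgc : Continuous g := f.continuous.comp hTmc
  set 𝒰' := @Finset.image _ _ (Classical.decEq _) (fun U => T^[m] ⁻¹' U) 𝒰 with h𝒰'def
  have h𝒰'oc : IsOpenCover 𝒰' := by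
    constructor
    · intro U hU
      obtain ⟨U0, hU0, rfl⟩ := Finset.mem_image.mp hU
      exact (h𝒰.1 _ hU0).preimage hTmc
    · apply Set.eq_univ_of_forall
      intro x
      have hx : T^[m] x ∈ ⋃₀ (𝒰 : Set (Set X)) := h𝒰.2.symm ▸ Set.mem_univ _
      obtain ⟨U, hU, hxU⟩ := hx
      exact ⟨T^[m] ⁻¹' U, Finset.mem_coe.mpr (Finset.mem_image_of_mem _ hU), hxU⟩
  have hnn : ∀ (h : X → ℝ) (𝒱 : Finset (Set X)) (K' : Set X),
      0 ≤ ∑ V ∈ 𝒱, sSup ((fun x => Real.exp (birk T h n x)) '' (V ∩ K')) := by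
    intro h 𝒱 K'
    refine Finset.sum_nonneg fun V _ => Real.sSup_nonneg ?_
    rintro r ⟨x, -, rfl⟩
    exact (Real.exp_pos _).le
  unfold covPn
  apply le_antisymm
  · -- `P_n(T, f∘Tᵐ, T^{-m}𝒰, T^{-m}K) ≤ P_n(T,f,𝒰,K)`
    apply csInf_le_csInf
    · exact ⟨0, by rintro r ⟨𝒱, -, -, rfl⟩; exact hnn _ _ _⟩
    · obtain ⟨𝒱, h1, h2⟩ := exists_refining T hT 𝒰 h𝒰 n
      exact ⟨_, 𝒱, h1, h2, rfl⟩
    · rintro r ⟨𝒱, hBC, hRef, rfl⟩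
      refine ⟨Finset.image (fun V => T^[m] ⁻¹' V) 𝒱, ⟨?_, ?_⟩, ?_, ?_⟩
      · intro V hV
        obtain ⟨V0, hV0, rfl⟩ := Finset.mem_image.mp hV
        exact (hBC.1 _ hV0).preimage hTmc.measurable
      · apply Set.eq_univ_of_forall
        intro x
        have hx : T^[m] x ∈ ⋃₀ (𝒱 : Set (Set X)) := hBC.2.symm ▸ Set.mem_univ _
        obtain ⟨V, hV, hxV⟩ := hx
        exact ⟨T^[m] ⁻¹' V, Finset.mem_coe.mpr (Finset.mem_image_of_mem _ hV), hxV⟩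
      · intro V hV
        obtain ⟨V0, hV0, rfl⟩ := Finset.mem_image.mp hV
        obtain ⟨gg, hgg, hsub⟩ := hRef V0 hV0
        refine ⟨fun i => T^[m] ⁻¹' gg i, fun i => Finset.mem_image_of_mem _ (hgg i), ?_⟩
        intro x hx
        refine Set.mem_iInter.mpr fun i => ?_
        have h3 : T^[m] x ∈ T^[(i : ℕ)] ⁻¹' gg i := Set.mem_iInter.mp (hsub hx) i
        show x ∈ T^[(i : ℕ)] ⁻¹' (T^[m] ⁻¹' gg i)
        rw [iter_preim_comm]
        exact h3
      · rw [Finset.sum_image (fun a _ b _ h => hTm.preimage_injective h)]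
        refine Finset.sum_congr rfl fun V hV => ?_
        congr 1
        rw [← Set.preimage_inter]
        have himg : (fun x => Real.exp (birk T g n x)) '' (T^[m] ⁻¹' (V ∩ K))
            = (fun x => Real.exp (birk T (⇑f) n x)) '' (T^[m] '' (T^[m] ⁻¹' (V ∩ K))) := by
          rw [← Set.image_comp]
          refine Set.image_congr fun x _ => ?_
          simp only [Function.comp_apply, hgdef]
          rw [birk_comp']
        rw [himg, Set.image_preimage_eq _ hTm]
  · -- `P_n(T,f,𝒰,K) ≤ P_n(T, f∘Tᵐ, T^{-m}𝒰, T^{-m}K)`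
    apply le_csInf
    · obtain ⟨𝒱, h1, h2⟩ := exists_refining T hT 𝒰' h𝒰'oc n
      exact ⟨_, 𝒱, h1, h2, rfl⟩
    · rintro r ⟨𝒱, hBC, hRef, rfl⟩
      have key : ∀ V : {V // V ∈ 𝒱}, ∃ gg : Fin n → Set X, (∀ i, gg i ∈ 𝒰) ∧
          (V : Set X) ⊆ T^[m] ⁻¹' ⋂ i : Fin n, T^[(i : ℕ)] ⁻¹' gg i := by
        rintro ⟨V, hV⟩
        obtain ⟨h, hmem, hsub⟩ := hRef V hV
        have hU : ∀ i, ∃ U, U ∈ 𝒰 ∧ T^[m] ⁻¹' U = h i := by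
          intro i
          obtain ⟨U, hU, hUe⟩ := Finset.mem_image.mp (hmem i)
          exact ⟨U, hU, hUe⟩
        choose U hU1 hU2 using hU
        refine ⟨U, hU1, hsub.trans ?_⟩
        rw [Set.preimage_iInter]
        refine Set.iInter_mono fun i => ?_
        rw [← iter_preim_comm, hU2 i]
      choose gg hgg hsub using key
      set A : {V // V ∈ 𝒱} → Set X :=
        fun V => ⋂ i : Fin n, T^[(i : ℕ)] ⁻¹' gg V i with hA
      set s : {V // V ∈ 𝒱} → ℝ := fun V =>
        sSup ((fun x => Real.exp (birk T g n x)) '' ((V : Set X) ∩ T^[m] ⁻¹' K)) with hsdef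
      have hs0 : ∀ V, 0 ≤ s V := by
        intro V
        refine Real.sSup_nonneg ?_
        rintro r ⟨x, -, rfl⟩
        exact (Real.exp_pos _).le
      set W : {V // V ∈ 𝒱} → Set X :=
        fun V => A V ∩ ({x | Real.exp (birk T (⇑f) n x) ≤ s V} ∪ Kᶜ) with hWdef
      have hbirkc : Continuous fun x => Real.exp (birk T (⇑f) n x) := by
        apply Real.continuous_exp.comp
        exact continuous_finset_sum _ fun j _ => f.continuous.comp (hT.iterate j)
      have hWmem : (∑ V ∈ 𝒱.attach.image W,
          sSup ((fun x => Real.exp (birk T (⇑f) n x)) '' (V ∩ K))) ∈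
          { r : ℝ | ∃ 𝒱' : Finset (Set X), IsBorelCover 𝒱' ∧ RefinesIter T 𝒰 n 𝒱' ∧
            r = ∑ V ∈ 𝒱', sSup ((fun x => Real.exp (birk T (⇑f) n x)) '' (V ∩ K)) } := by
        refine ⟨𝒱.attach.image W, ⟨?_, ?_⟩, ?_, rfl⟩
        · intro V hV
          obtain ⟨V0, -, rfl⟩ := Finset.mem_image.mp hV
          refine (MeasurableSet.iInter fun i =>
            ((h𝒰.1 _ (hgg V0 i)).measurableSet).preimage (hT.iterate _).measurable).inter ?_
          exact ((isClosed_le hbirkc continuous_const).measurableSet).union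
            hK.isClosed.measurableSet.compl
        · apply Set.eq_univ_of_forall
          intro x
          obtain ⟨y, hy⟩ := hTm x
          have hyU : y ∈ ⋃₀ (𝒱 : Set (Set X)) := hBC.2.symm ▸ Set.mem_univ _
          obtain ⟨V, hV, hyV⟩ := hyU
          have hV' : V ∈ 𝒱 := hV
          have hxA : x ∈ A ⟨V, hV'⟩ := by
            have h5 := hsub ⟨V, hV'⟩ hyV
            rwa [Set.mem_preimage, hy] at h5
          refine Set.mem_sUnion.mpr ⟨W ⟨V, hV'⟩, Finset.mem_coe.mpr
            (Finset.mem_image_of_mem _ (Finset.mem_attach _ _)), ?_⟩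
          by_cases hxK : x ∈ K
          · refine ⟨hxA, Or.inl ?_⟩
            have hyVK : y ∈ (V : Set X) ∩ T^[m] ⁻¹' K :=
              ⟨hyV, by rw [Set.mem_preimage, hy]; exact hxK⟩
            have hmemim : Real.exp (birk T (⇑f) n x) ∈
                (fun x => Real.exp (birk T g n x)) '' ((V : Set X) ∩ T^[m] ⁻¹' K) := by
              refine ⟨y, hyVK, ?_⟩
              simp only [hgdef]
              rw [birk_comp', hy]
            exact le_csSup (exp_birk_bddAbove T hT g hgc n _) hmemim
          · exact ⟨hxA, Or.inr hxK⟩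
        · intro V hV
          obtain ⟨V0, -, rfl⟩ := Finset.mem_image.mp hV
          exact ⟨gg V0, hgg V0, Set.inter_subset_left⟩
      have hbdd : BddBelow { r : ℝ | ∃ 𝒱' : Finset (Set X), IsBorelCover 𝒱' ∧
          RefinesIter T 𝒰 n 𝒱' ∧
          r = ∑ V ∈ 𝒱', sSup ((fun x => Real.exp (birk T (⇑f) n x)) '' (V ∩ K)) } :=
        ⟨0, by rintro r ⟨𝒱', -, -, rfl⟩; exact hnn _ _ _⟩
      calc sInf _ ≤ ∑ V ∈ 𝒱.attach.image W,
            sSup ((fun x => Real.exp (birk T (⇑f) n x)) '' (V ∩ K)) := csInf_le hbdd hWmem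
        _ ≤ ∑ V ∈ 𝒱.attach,
            sSup ((fun x => Real.exp (birk T (⇑f) n x)) '' (W V ∩ K)) := by
            refine sum_image_le'' _ _ _ fun b => Real.sSup_nonneg ?_
            rintro r ⟨x, -, rfl⟩
            exact (Real.exp_pos _).le
        _ ≤ ∑ V ∈ 𝒱.attach, s V := by
            refine Finset.sum_le_sum fun V _ => Real.sSup_le ?_ (hs0 V)
            rintro e ⟨x, ⟨⟨-, hxc⟩, hxK⟩, rfl⟩
            rcases hxc with hle | hnK
            · exact hle
            · exact absurd hxK hnK
        _ = ∑ V ∈ 𝒱, sSup ((fun x => Real.exp (birk T g n x)) '' (V ∩ T^[m] ⁻¹' K)) :=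
            by
            simp only [hsdef]
            exact Finset.sum_attach 𝒱 fun V =>
              sSup ((fun x => Real.exp (birk T g n x)) '' (V ∩ T^[m] ⁻¹' K))
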